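/- Let α ∈ (0,2). There is a constant C ≥ 1 (depending on α, the Li–Yau constants, the subordinator constants and the volume comparability constants) such that for all t > 0 and all x, y, z ∈ M with d(y,z) ≤ t^{1/α}: C^{−1} ≤ P_t^α(x,y) / P_t^α(x,z) ≤ C. -/

import Mathlib

open MeasureTheory Metric Real Filter

/-- `exp (-x) ≤ p^p * x^(-p)` for positive `p, x`. -/
lemma aux_exp_le {p x : ℝ} (hp : 0 < p) (hx : 0 < x) :
    Real.exp (-x) ≤ p ^ p * x ^ (-p) := by
  have h1 : x / p ≤ Real.exp (x / p) := by
    have := Real.add_one_le_exp (x / p); linarith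
  have h2 : (x / p) ^ p ≤ Real.exp x := by
    have := Real.rpow_le_rpow (by positivity : (0:ℝ) ≤ x / p) h1 hp.le
    rwa [← Real.exp_mul, div_mul_cancel₀ x hp.ne'] at this
  have h3 : x ^ p / p ^ p ≤ Real.exp x := by
    rwa [Real.div_rpow hx.le hp.le] at h2
  have hxp : (0:ℝ) < x ^ p := Real.rpow_pos_of_pos hx p
  have hpp : (0:ℝ) < p ^ p := Real.rpow_pos_of_pos hp p
  rw [Real.exp_neg, Real.rpow_neg hx.le]
  calc (Real.exp x)⁻¹ ≤ (x ^ p / p ^ p)⁻¹ := by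
        apply inv_anti₀ (by positivity) h3
    _ = p ^ p * (x ^ p)⁻¹ := by field_simp

lemma aux_setIntegral_le {f : ℝ → ℝ} {s : Set ℝ} (hs : MeasurableSet s) (hμ : volume s ≠ ⊤)
    (hm : AEStronglyMeasurable f (volume.restrict s)) {K : ℝ}
    (hnn : ∀ u ∈ s, 0 ≤ f u) (hb : ∀ u ∈ s, f u ≤ K) :
    IntegrableOn f s ∧ ∫ u in s, f u ≤ K * (volume s).toReal := by
  have hconst : IntegrableOn (fun _ : ℝ => K) s := by
    rw [integrableOn_const_iff]; exact Or.inr hμ.lt_top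
  have hint : IntegrableOn f s := by
    refine Integrable.mono' hconst hm ?_
    refine (ae_restrict_iff' hs).2 (ae_of_all _ fun u hu => ?_)
    rw [Real.norm_eq_abs, abs_of_nonneg (hnn u hu)]; exact hb u hu
  refine ⟨hint, ?_⟩
  calc ∫ u in s, f u ≤ ∫ _ in s, K := setIntegral_mono_on hint hconst hs hb
    _ = (volume s).toReal • K := setIntegral_const K
    _ = K * (volume s).toReal := by rw [smul_eq_mul, mul_comm]

lemma aux_le_setIntegral {f : ℝ → ℝ} {s : Set ℝ} (hs : MeasurableSet s) (hμ : volume s ≠ ⊤)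
    (hint : IntegrableOn f s) {K : ℝ} (hb : ∀ u ∈ s, K ≤ f u) :
    K * (volume s).toReal ≤ ∫ u in s, f u := by
  have hconst : IntegrableOn (fun _ : ℝ => K) s := by
    rw [integrableOn_const_iff]; exact Or.inr hμ.lt_top
  calc K * (volume s).toReal = (volume s).toReal • K := by rw [smul_eq_mul, mul_comm]
    _ = ∫ _ in s, K := (setIntegral_const K).symm
    _ ≤ ∫ u in s, f u := setIntegral_mono_on hconst hint hs hb

lemma aux_collect1 {u r c a nu : ℝ} (hu : 0 < u) (hr : 0 < r) (hc : 0 < c) :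
    (r / Real.sqrt u) ^ nu * ((c * r ^ 2 / u) ^ (-(a + nu/2)) * u ^ (-a)) =
      c ^ (-(a + nu/2)) * r ^ (-(2*a)) := by
  have hsu : (0:ℝ) < Real.sqrt u := Real.sqrt_pos.2 hu
  have h1 : (0:ℝ) < r / Real.sqrt u := by positivity
  have h2 : (0:ℝ) < c * r ^ 2 / u := by positivity
  have hL : (0:ℝ) < (r / Real.sqrt u) ^ nu * ((c * r ^ 2 / u) ^ (-(a + nu/2)) * u ^ (-a)) := by
    positivity
  have hR : (0:ℝ) < c ^ (-(a + nu/2)) * r ^ (-(2*a)) := by positivity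
  have eL : Real.log ((r / Real.sqrt u) ^ nu * ((c * r ^ 2 / u) ^ (-(a + nu/2)) * u ^ (-a)))
      = nu * (Real.log r - Real.log (Real.sqrt u)) +
        ((-(a + nu/2)) * (Real.log c + 2 * Real.log r - Real.log u) + (-a) * Real.log u) := by
    rw [Real.log_mul (by positivity) (by positivity), Real.log_mul (by positivity) (by positivity),
      Real.log_rpow h1, Real.log_rpow h2, Real.log_rpow hu,
      Real.log_div hr.ne' hsu.ne', Real.log_div (by positivity) hu.ne',
      Real.log_mul hc.ne' (by positivity), Real.log_pow]
    push_cast; ring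
  have eR : Real.log (c ^ (-(a + nu/2)) * r ^ (-(2*a)))
      = (-(a + nu/2)) * Real.log c + (-(2*a)) * Real.log r := by
    rw [Real.log_mul (by positivity) (by positivity), Real.log_rpow hc, Real.log_rpow hr]
  rw [← Real.exp_log hL, ← Real.exp_log hR, eL, eR, Real.log_sqrt hu.le]
  congr 1
  ring

lemma aux_collect2 {u τ ca T' a nu q na : ℝ} (hu : 0 < u) (hτ : 0 < τ) (hca : 0 < ca)
    (hT' : 0 < T') (hqna : q * na = a + nu / 2) :
    (τ / Real.sqrt u) ^ nu * (u ^ (-a) * (ca * T' * u ^ (-q)) ^ (-na)) =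
      ca ^ (-na) * T' ^ (-na) * τ ^ nu := by
  have hsu : (0:ℝ) < Real.sqrt u := Real.sqrt_pos.2 hu
  have h1 : (0:ℝ) < τ / Real.sqrt u := by positivity
  have h2 : (0:ℝ) < ca * T' * u ^ (-q) := by positivity
  have hL : (0:ℝ) < (τ / Real.sqrt u) ^ nu * (u ^ (-a) * (ca * T' * u ^ (-q)) ^ (-na)) := by
    positivity
  have hR : (0:ℝ) < ca ^ (-na) * T' ^ (-na) * τ ^ nu := by positivity
  have eL : Real.log ((τ / Real.sqrt u) ^ nu * (u ^ (-a) * (ca * T' * u ^ (-q)) ^ (-na)))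
      = nu * (Real.log τ - Real.log (Real.sqrt u)) +
        ((-a) * Real.log u + (-na) * (Real.log ca + Real.log T' + (-q) * Real.log u)) := by
    rw [Real.log_mul (by positivity) (by positivity), Real.log_mul (by positivity) (by positivity),
      Real.log_rpow h1, Real.log_rpow hu, Real.log_rpow h2,
      Real.log_div hτ.ne' hsu.ne',
      Real.log_mul (by positivity) (by positivity), Real.log_mul hca.ne' hT'.ne',
      Real.log_rpow hu]
  have eR : Real.log (ca ^ (-na) * T' ^ (-na) * τ ^ nu)
      = (-na) * Real.log ca + (-na) * Real.log T' + nu * Real.log τ := by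
    rw [Real.log_mul (by positivity) (by positivity), Real.log_mul (by positivity) (by positivity),
      Real.log_rpow hca, Real.log_rpow hT', Real.log_rpow hτ]
  rw [← Real.exp_log hL, ← Real.exp_log hR, eL, eR, Real.log_sqrt hu.le]
  congr 1
  linear_combination (Real.log u) * hqna

lemma aux_collect3 {R e : ℝ} (hR : 0 < R) :
    (2 * R ^ 2) ^ e * R ^ 2 = 2 ^ e * R ^ (2*e+2) := by
  have h2 : (0:ℝ) < 2 * R ^ 2 := by positivity
  have hL : (0:ℝ) < (2 * R ^ 2) ^ e * R ^ 2 := by positivity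
  have hR' : (0:ℝ) < (2:ℝ) ^ e * R ^ (2*e+2) := by positivity
  have eL : Real.log ((2 * R ^ 2) ^ e * R ^ 2)
      = e * (Real.log 2 + 2 * Real.log R) + 2 * Real.log R := by
    rw [Real.log_mul (by positivity) (by positivity), Real.log_rpow h2,
      Real.log_mul (by norm_num) (by positivity), Real.log_pow]
    push_cast; ring
  have eR : Real.log ((2:ℝ) ^ e * R ^ (2*e+2))
      = e * Real.log 2 + (2*e+2) * Real.log R := by
    rw [Real.log_mul (by positivity) (by positivity), Real.log_rpow (by norm_num),
      Real.log_rpow hR]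
  rw [← Real.exp_log hL, ← Real.exp_log hR', eL, eR]
  congr 1
  ring

/-- The fractional heat kernel: the kernel subordinated to the heat kernel `h` via the
stable subordinator densities `η`: `P_t^α(x,y) = ∫₀^∞ h_u(x,y) η_t(u) du`. -/
noncomputable def Pker {M : Type*} (h : ℝ → M → M → ℝ) (η : ℝ → ℝ → ℝ)
    (t : ℝ) (x y : M) : ℝ :=
  ∫ u in Set.Ioi (0:ℝ), h u x y * η t u

set_option maxHeartbeats 1000000 in
/-- comparability of the fractional heat kernel at nearby base points:
if `d(y,z) ≤ t^{1/α}` then `C⁻¹ ≤ P_t^α(x,y)/P_t^α(x,z) ≤ C`. -/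
theorem stmt_11
    {M : Type*} [MetricSpace M] [MeasurableSpace M] [BorelSpace M]
    (μ : Measure M)
    (hVpos : ∀ (x : M) (r : ℝ), 0 < r → 0 < μ (ball x r))
    (hVfin : ∀ (x : M) (r : ℝ), 0 < r → μ (ball x r) < ⊤)
    -- volume comparability
    (ν ν' c₀ C₀ : ℝ) (hν' : 0 < ν') (hνν : ν' ≤ ν) (hc₀ : 0 < c₀) (hc₀C₀ : c₀ ≤ C₀)
    (hdoub : ∀ (x : M) (r R : ℝ), 0 < r → r ≤ R →
        c₀ * (R/r) ^ ν' ≤ (μ (ball x R)).toReal / (μ (ball x r)).toReal ∧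
        (μ (ball x R)).toReal / (μ (ball x r)).toReal ≤ C₀ * (R/r) ^ ν)
    (hcomp : ∀ (x y : M) (r : ℝ), 0 < r →
        (μ (ball x r)).toReal ≤ C₀ * (1 + dist x y / r) ^ ν * (μ (ball y r)).toReal)
    -- heat kernel with Li–Yau two-sided Gaussian estimate
    (h : ℝ → M → M → ℝ)
    (hhmeas : Measurable (fun p : ℝ × M × M => h p.1 p.2.1 p.2.2))
    (hhsym : ∀ u : ℝ, 0 < u → ∀ x y : M, h u x y = h u y x)
    (c₁ C₁ c₂ C₂ : ℝ) (hc₁ : 0 < c₁) (hC₁ : 0 < C₁) (hc₂ : 0 < c₂) (hC₂ : 0 < C₂)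
    (hLY : ∀ u : ℝ, 0 < u → ∀ x y : M,
        c₁ / (μ (ball y (Real.sqrt u))).toReal * Real.exp (-C₁ * (dist x y)^2 / u) ≤ h u x y ∧
        h u x y ≤ C₂ / (μ (ball y (Real.sqrt u))).toReal * Real.exp (-c₂ * (dist x y)^2 / u))
    -- stable subordinator densities with two-sided bounds
    (α : ℝ) (hα0 : 0 < α) (hα2 : α < 2)
    (η : ℝ → ℝ → ℝ)
    (hηmeas : Measurable (fun p : ℝ × ℝ => η p.1 p.2))
    (hηpos : ∀ t : ℝ, 0 < t → ∀ u : ℝ, 0 < u → 0 < η t u)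
    (cs Cs : ℝ) (hcs : 0 < cs) (hcsCs : cs ≤ Cs)
    (hηbd : ∀ t : ℝ, 0 < t → ∀ u : ℝ, 0 < u →
        (u ≤ t ^ (2/α) →
          cs ≤ η t u / (t ^ (1/(2-α)) * u ^ (-((4-α)/(4-2*α))) *
              Real.exp (-(((2-α)/2) * (α/2) ^ (α/(2-α))) * t ^ (2/(2-α)) * u ^ (-(α/(2-α))))) ∧
          η t u / (t ^ (1/(2-α)) * u ^ (-((4-α)/(4-2*α))) *
              Real.exp (-(((2-α)/2) * (α/2) ^ (α/(2-α))) * t ^ (2/(2-α)) * u ^ (-(α/(2-α))))) ≤ Cs) ∧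
        (t ^ (2/α) < u →
          cs ≤ η t u / (t * u ^ (-1-α/2)) ∧ η t u / (t * u ^ (-1-α/2)) ≤ Cs)) :
    ∃ C : ℝ, 1 ≤ C ∧ ∀ t : ℝ, 0 < t → ∀ x y z : M, dist y z ≤ t ^ (1/α) →
      C⁻¹ ≤ Pker h η t x y / Pker h η t x z ∧
      Pker h η t x y / Pker h η t x z ≤ C := by
  have hν : 0 < ν := lt_of_lt_of_le hν' hνν
  have hC₀ : (0:ℝ) < C₀ := lt_of_lt_of_le hc₀ hc₀C₀
  have hCs : (0:ℝ) < Cs := lt_of_lt_of_le hcs hcsCs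
  have hs2 : (0:ℝ) < 2 - α := by linarith
  have hα_ne : α ≠ 0 := ne_of_gt hα0
  have hs2_ne : (2:ℝ) - α ≠ 0 := ne_of_gt hs2
  -- volume basics
  have hVpos' : ∀ (w : M) (ρ : ℝ), 0 < ρ → 0 < (μ (ball w ρ)).toReal := fun w ρ hρ =>
    ENNReal.toReal_pos (hVpos w ρ hρ).ne' (hVfin w ρ hρ).ne
  have hVmono : ∀ (w : M) (ρ₁ ρ₂ : ℝ), 0 < ρ₂ → ρ₁ ≤ ρ₂ →
      (μ (ball w ρ₁)).toReal ≤ (μ (ball w ρ₂)).toReal := fun w ρ₁ ρ₂ h2 hle =>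
    ENNReal.toReal_mono (hVfin w ρ₂ h2).ne (measure_mono (ball_subset_ball hle))
  have hVdoub : ∀ (w : M) (ρ Rr : ℝ), 0 < ρ → ρ ≤ Rr →
      (μ (ball w Rr)).toReal ≤ C₀ * (Rr/ρ) ^ ν * (μ (ball w ρ)).toReal := by
    intro w ρ Rr h1 h2
    have hp := hVpos' w ρ h1
    have hd := (hdoub w ρ Rr h1 h2).2
    calc (μ (ball w Rr)).toReal
        = (μ (ball w Rr)).toReal / (μ (ball w ρ)).toReal * (μ (ball w ρ)).toReal := by
          field_simp
      _ ≤ C₀ * (Rr/ρ) ^ ν * (μ (ball w ρ)).toReal :=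
          mul_le_mul_of_nonneg_right hd hp.le
  -- measurability of the integrand
  have hfm : ∀ (t : ℝ) (x y : M), Measurable (fun u : ℝ => h u x y * η t u) := by
    intro t x y
    have hg : Measurable (fun u : ℝ => (u, (x, y)) : ℝ → ℝ × M × M) :=
      measurable_id.prodMk measurable_const
    have h1 : Measurable fun u : ℝ => h u x y := hhmeas.comp hg
    have h2 : Measurable fun u : ℝ => η t u :=
      hηmeas.comp (measurable_const.prodMk measurable_id)
    exact h1.mul h2
  have hhnn : ∀ u : ℝ, 0 < u → ∀ x y : M, 0 ≤ h u x y := by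
    intro u hu x y
    refine le_trans ?_ (hLY u hu x y).1
    have := hVpos' y (Real.sqrt u) (Real.sqrt_pos.2 hu)
    positivity
  -- exponents and constants
  set q : ℝ := α/(2-α) with hq_def
  set a : ℝ := (4-α)/(4-2*α) with ha_def
  set ca : ℝ := ((2-α)/2) * (α/2) ^ q with hca_def
  have hq : 0 < q := by rw [hq_def]; positivity
  have ha : 0 < a := by rw [ha_def]; apply div_pos <;> linarith
  have hca : 0 < ca := by rw [hca_def]; positivity
  set pa : ℝ := a + ν/2 with hpa_def
  set na : ℝ := (a + ν/2) * ((2-α)/α) with hna_def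
  set pb : ℝ := 1 + α/2 + ν/2 with hpb_def
  have hpa : 0 < pa := by rw [hpa_def]; positivity
  have hna : 0 < na := by rw [hna_def]; positivity
  have hpb : 0 < pb := by rw [hpb_def]; positivity
  have hqna : q * na = a + ν/2 := by
    rw [hq_def, hna_def]; field_simp
  set K1a : ℝ := C₂ * C₀ * Cs * (pa ^ pa * c₂ ^ (-pa)) with hK1a_def
  set K1b : ℝ := C₂ * C₀ * Cs * (na ^ na * ca ^ (-na)) with hK1b_def
  set B₁ : ℝ := K1a + K1b with hB1_def
  set B₂ : ℝ := C₂ * C₀ * Cs * (pb ^ pb * c₂ ^ (-pb)) with hB2_def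
  set B₃ : ℝ := C₂ * Cs * (2/α) with hB3_def
  have hK1a : 0 < K1a := by rw [hK1a_def]; positivity
  have hK1b : 0 < K1b := by rw [hK1b_def]; positivity
  have hB1 : 0 < B₁ := by rw [hB1_def]; positivity
  have hB2 : 0 < B₂ := by rw [hB2_def]; positivity
  have hB3 : 0 < B₃ := by rw [hB3_def]; positivity
  set Bup : ℝ := B₁ + B₂ + B₃ with hBup_def
  have hBup : 0 < Bup := by rw [hBup_def]; positivity
  set Alow : ℝ := cs * c₁ * Real.exp (-C₁) * (2:ℝ) ^ (-1-α/2) / (C₀ * Real.sqrt 2 ^ ν)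
    with hAlow_def
  have hAlow : 0 < Alow := by
    rw [hAlow_def]
    have : (0:ℝ) < Real.sqrt 2 := by positivity
    positivity
  -- η bounds in usable form
  have hη1 : ∀ t : ℝ, 0 < t → ∀ u : ℝ, 0 < u → u ≤ t ^ (2/α) →
      η t u ≤ Cs * (t ^ (1/(2-α)) * u ^ (-a) *
        Real.exp (-ca * t ^ (2/(2-α)) * u ^ (-q))) := by
    intro t ht u hu hle
    have hD : (0:ℝ) < t ^ (1/(2-α)) * u ^ (-a) *
        Real.exp (-ca * t ^ (2/(2-α)) * u ^ (-q)) := by positivity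
    have h2 := ((hηbd t ht u hu).1 hle).2
    rw [div_le_iff₀ hD] at h2
    linarith
  have hη2ub : ∀ t : ℝ, 0 < t → ∀ u : ℝ, 0 < u → t ^ (2/α) < u →
      η t u ≤ Cs * (t * u ^ (-1-α/2)) := by
    intro t ht u hu hgt
    have hD : (0:ℝ) < t * u ^ (-1-α/2) := by positivity
    have h2 := ((hηbd t ht u hu).2 hgt).2
    rw [div_le_iff₀ hD] at h2
    linarith
  have hη2lb : ∀ t : ℝ, 0 < t → ∀ u : ℝ, 0 < u → t ^ (2/α) < u →
      cs * (t * u ^ (-1-α/2)) ≤ η t u := by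
    intro t ht u hu hgt
    have hD : (0:ℝ) < t * u ^ (-1-α/2) := by positivity
    have h2 := ((hηbd t ht u hu).2 hgt).1
    rw [le_div_iff₀ hD] at h2
    linarith
  -- main upper bound (with integrability)
  have main : ∀ t : ℝ, 0 < t → ∀ x y : M,
      IntegrableOn (fun u : ℝ => h u x y * η t u) (Set.Ioi 0) ∧
      Pker h η t x y ≤ Bup * (t * (max (dist x y) (t ^ (1/α))) ^ (-α) /
        (μ (ball y (max (dist x y) (t ^ (1/α))))).toReal) := by
    intro t ht x y
    set r : ℝ := dist x y with hr_def
    have hr0 : 0 ≤ r := dist_nonneg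
    set τ : ℝ := t ^ (1/α) with hτ_def
    have hτ : 0 < τ := Real.rpow_pos_of_pos ht _
    set R : ℝ := max r τ with hR_def
    have hτR : τ ≤ R := le_max_right _ _
    have hrR : r ≤ R := le_max_left _ _
    have hR0 : 0 < R := lt_of_lt_of_le hτ hτR
    set T2 : ℝ := t ^ (2/α) with hT2_def
    have hT2 : 0 < T2 := Real.rpow_pos_of_pos ht _
    have hT2τ : T2 = τ ^ 2 := by
      rw [hT2_def, hτ_def, ← Real.rpow_natCast (t ^ (1/α)) 2, ← Real.rpow_mul ht.le]
      congr 1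
      push_cast
      field_simp
    have hT2R2 : T2 ≤ R ^ 2 := by
      rw [hT2τ]; exact pow_le_pow_left₀ hτ.le hτR 2
    have hV : 0 < (μ (ball y R)).toReal := hVpos' y R hR0
    set f : ℝ → ℝ := fun u => h u x y * η t u with hf_def
    have hfnn : ∀ u : ℝ, 0 < u → 0 ≤ f u := fun u hu =>
      mul_nonneg (hhnn u hu x y) (hηpos t ht u hu).le
    set g : ℝ := t * R ^ (-α) / (μ (ball y R)).toReal with hg_def
    have hg0 : 0 < g := by
      rw [hg_def]; exact div_pos (mul_pos ht (Real.rpow_pos_of_pos hR0 _)) hV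
    have hvol_ne1 : volume (Set.Ioc (0:ℝ) T2) ≠ ⊤ := by
      rw [Real.volume_Ioc]; exact ENNReal.ofReal_ne_top
    have hvolT2 : (volume (Set.Ioc (0:ℝ) T2)).toReal = T2 := by
      rw [Real.volume_Ioc, ENNReal.toReal_ofReal (by linarith)]; ring
    -- ### piece 1 : small times
    have piece1 : IntegrableOn f (Set.Ioc 0 T2) ∧ ∫ u in Set.Ioc (0:ℝ) T2, f u ≤ B₁ * g := by
      rcases le_or_gt τ r with hcase | hcase
      · -- off-diagonal case  τ ≤ r
        have hRr : R = r := by rw [hR_def]; exact max_eq_left hcase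
        have hrpos : 0 < r := lt_of_lt_of_le hτ hcase
        have hVr : 0 < (μ (ball y r)).toReal := hVpos' y r hrpos
        set K : ℝ := K1a * (t ^ (1/(2-α)) * r ^ (-(2*a))) / (μ (ball y r)).toReal with hK_def
        have hbd : ∀ u ∈ Set.Ioc (0:ℝ) T2, f u ≤ K := by
          intro u hu
          obtain ⟨hu0, huT⟩ := hu
          have hsu : 0 < Real.sqrt u := Real.sqrt_pos.2 hu0
          have hsur : Real.sqrt u ≤ r := by
            calc Real.sqrt u ≤ Real.sqrt T2 := Real.sqrt_le_sqrt huT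
              _ = τ := by rw [hT2τ]; exact Real.sqrt_sq hτ.le
              _ ≤ r := hcase
          have hVsu : 0 < (μ (ball y (Real.sqrt u))).toReal := hVpos' y _ hsu
          have hW : 0 < (r / Real.sqrt u) ^ ν := Real.rpow_pos_of_pos (div_pos hrpos hsu) _
          have hLY2 := (hLY u hu0 x y).2
          rw [← hr_def] at hLY2
          have hVb : C₂ / (μ (ball y (Real.sqrt u))).toReal ≤
              C₂ * (C₀ * (r / Real.sqrt u) ^ ν / (μ (ball y r)).toReal) := by
            have hd := hVdoub y (Real.sqrt u) r hsu hsur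
            have h1 : 1 / (μ (ball y (Real.sqrt u))).toReal ≤
                C₀ * (r / Real.sqrt u) ^ ν / (μ (ball y r)).toReal := by
              rw [div_le_div_iff₀ hVsu hVr]
              calc 1 * (μ (ball y r)).toReal = (μ (ball y r)).toReal := one_mul _
                _ ≤ C₀ * (r / Real.sqrt u) ^ ν * (μ (ball y (Real.sqrt u))).toReal := hd
            calc C₂ / (μ (ball y (Real.sqrt u))).toReal
                = C₂ * (1 / (μ (ball y (Real.sqrt u))).toReal) := by ring
              _ ≤ C₂ * (C₀ * (r / Real.sqrt u) ^ ν / (μ (ball y r)).toReal) :=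
                  mul_le_mul_of_nonneg_left h1 hC₂.le
          have hx : 0 < c₂ * r^2 / u := div_pos (mul_pos hc₂ (pow_pos hrpos 2)) hu0
          have hgauss : Real.exp (-c₂ * r^2 / u) ≤ pa ^ pa * (c₂ * r^2 / u) ^ (-pa) := by
            have := aux_exp_le hpa hx
            rw [show -c₂ * r^2 / u = -(c₂ * r^2 / u) by ring]
            exact this
          have hh : h u x y ≤ C₂ * (C₀ * (r / Real.sqrt u) ^ ν / (μ (ball y r)).toReal) *
              (pa ^ pa * (c₂ * r^2 / u) ^ (-pa)) := by
            calc h u x y ≤ C₂ / (μ (ball y (Real.sqrt u))).toReal *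
                Real.exp (-c₂ * r^2 / u) := hLY2
              _ ≤ _ := mul_le_mul hVb hgauss (Real.exp_pos _).le
                  (mul_nonneg hC₂.le (div_nonneg (mul_nonneg hC₀.le hW.le) hVr.le))
          have hexp1 : Real.exp (-ca * t ^ (2/(2-α)) * u ^ (-q)) ≤ 1 := by
            have h0 : (0:ℝ) ≤ ca * t ^ (2/(2-α)) * u ^ (-q) :=
              mul_nonneg (mul_nonneg hca.le (Real.rpow_nonneg ht.le _))
                (Real.rpow_nonneg hu0.le _)
            calc Real.exp (-ca * t ^ (2/(2-α)) * u ^ (-q)) ≤ Real.exp 0 := by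
                  apply Real.exp_le_exp.2
                  rw [show -ca * t ^ (2/(2-α)) * u ^ (-q)
                    = -(ca * t ^ (2/(2-α)) * u ^ (-q)) by ring]
                  linarith
              _ = 1 := Real.exp_zero
          have hηb : η t u ≤ Cs * (t ^ (1/(2-α)) * u ^ (-a)) := by
            calc η t u ≤ Cs * (t ^ (1/(2-α)) * u ^ (-a) *
                Real.exp (-ca * t ^ (2/(2-α)) * u ^ (-q))) := hη1 t ht u hu0 huT
              _ ≤ Cs * (t ^ (1/(2-α)) * u ^ (-a) * 1) := by
                  apply mul_le_mul_of_nonneg_left _ hCs.le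
                  exact mul_le_mul_of_nonneg_left hexp1
                    (mul_nonneg (Real.rpow_nonneg ht.le _) (Real.rpow_nonneg hu0.le _))
              _ = Cs * (t ^ (1/(2-α)) * u ^ (-a)) := by ring
          have hcomb : f u ≤ (C₂ * (C₀ * (r / Real.sqrt u) ^ ν / (μ (ball y r)).toReal) *
              (pa ^ pa * (c₂ * r^2 / u) ^ (-pa))) * (Cs * (t ^ (1/(2-α)) * u ^ (-a))) :=
            mul_le_mul hh hηb (hηpos t ht u hu0).le
              (mul_nonneg
                (mul_nonneg hC₂.le (div_nonneg (mul_nonneg hC₀.le hW.le) hVr.le))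
                (mul_nonneg (Real.rpow_nonneg hpa.le _) (Real.rpow_nonneg hx.le _)))
          have hcoll := aux_collect1 (u := u) (r := r) (c := c₂) (a := a) (nu := ν)
            hu0 hrpos hc₂
          rw [← hpa_def] at hcoll
          refine le_trans hcomb (le_of_eq ?_)
          rw [hK_def, hK1a_def]
          linear_combination (C₂ * C₀ * Cs * pa ^ pa * t ^ (1/(2-α)) /
            (μ (ball y r)).toReal) * hcoll
        obtain ⟨hint1, hle1⟩ := aux_setIntegral_le measurableSet_Ioc hvol_ne1
          ((hfm t x y).aestronglyMeasurable) (fun u hu => hfnn u hu.1) hbd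
        refine ⟨hint1, ?_⟩
        have h2a : 0 ≤ 2*a - α := by
          have h42 : (4:ℝ) - 2*α ≠ 0 := by intro hc; linarith
          have hexp : 2*a - α = (α^2 - 3*α + 4)/(2-α) := by
            rw [ha_def]; field_simp; ring
          rw [hexp]
          apply div_nonneg _ hs2.le
          have hsq : (0:ℝ) ≤ (α - 3/2)^2 := sq_nonneg _
          have hsq2 : (α - 3/2)^2 = α^2 - 3*α + 9/4 := by ring
          rw [hsq2] at hsq
          linarith
        have e1 : t ^ (1/(2-α)) * T2 = t * τ ^ (2*a - α) := by
          rw [hT2_def, hτ_def, ← Real.rpow_mul ht.le, ← Real.rpow_add ht,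
            show t * t ^ (1/α * (2*a-α)) = t ^ (1:ℝ) * t ^ (1/α * (2*a-α)) by
              rw [Real.rpow_one],
            ← Real.rpow_add ht]
          congr 1
          have h42 : (4:ℝ) - 2*α ≠ 0 := by intro hc; linarith
          rw [ha_def]
          field_simp
          ring
        have e2 : τ ^ (2*a-α) ≤ r ^ (2*a-α) := Real.rpow_le_rpow hτ.le hcase h2a
        have key : t ^ (1/(2-α)) * r ^ (-(2*a)) * T2 ≤ t * r ^ (-α) := by
          calc t ^ (1/(2-α)) * r ^ (-(2*a)) * T2
              = (t ^ (1/(2-α)) * T2) * r ^ (-(2*a)) := by ring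
            _ = t * (τ ^ (2*a-α) * r ^ (-(2*a))) := by rw [e1]; ring
            _ ≤ t * (r ^ (2*a-α) * r ^ (-(2*a))) := by
                apply mul_le_mul_of_nonneg_left _ ht.le
                exact mul_le_mul_of_nonneg_right e2 (Real.rpow_nonneg hr0 _)
            _ = t * r ^ (-α) := by
                rw [← Real.rpow_add hrpos, show (2*a-α) + -(2*a) = -α by ring]
        calc ∫ u in Set.Ioc (0:ℝ) T2, f u ≤ K * (volume (Set.Ioc (0:ℝ) T2)).toReal := hle1
          _ = K1a * (t ^ (1/(2-α)) * r ^ (-(2*a)) * T2) / (μ (ball y r)).toReal := by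
              rw [hvolT2, hK_def]; ring
          _ ≤ K1a * (t * r ^ (-α)) / (μ (ball y r)).toReal := by
              apply (div_le_div_iff_of_pos_right hVr).2
              exact mul_le_mul_of_nonneg_left key hK1a.le
          _ ≤ B₁ * g := by
              rw [hg_def, hRr, hB1_def,
                show (K1a + K1b) * (t * r ^ (-α) / (μ (ball y r)).toReal)
                  = (K1a + K1b) * (t * r ^ (-α)) / (μ (ball y r)).toReal by ring]
              apply (div_le_div_iff_of_pos_right hVr).2
              have hx2 : 0 ≤ t * r ^ (-α) := mul_nonneg ht.le (Real.rpow_nonneg hr0 _)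
              apply mul_le_mul_of_nonneg_right _ hx2
              linarith
      · -- on-diagonal case r < τ
        have hRτ : R = τ := by rw [hR_def]; exact max_eq_right hcase.le
        have hVτ : 0 < (μ (ball y τ)).toReal := hVpos' y τ hτ
        set K : ℝ := K1b * (t ^ (1/(2-α)) * (t ^ (2/(2-α))) ^ (-na) * τ ^ ν) /
          (μ (ball y τ)).toReal with hK_def
        have hT' : 0 < t ^ (2/(2-α)) := Real.rpow_pos_of_pos ht _
        have hbd : ∀ u ∈ Set.Ioc (0:ℝ) T2, f u ≤ K := by
          intro u hu
          obtain ⟨hu0, huT⟩ := hu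
          have hsu : 0 < Real.sqrt u := Real.sqrt_pos.2 hu0
          have hsuτ : Real.sqrt u ≤ τ := by
            calc Real.sqrt u ≤ Real.sqrt T2 := Real.sqrt_le_sqrt huT
              _ = τ := by rw [hT2τ]; exact Real.sqrt_sq hτ.le
          have hVsu : 0 < (μ (ball y (Real.sqrt u))).toReal := hVpos' y _ hsu
          have hW : 0 < (τ / Real.sqrt u) ^ ν := Real.rpow_pos_of_pos (div_pos hτ hsu) _
          have hLY2 := (hLY u hu0 x y).2
          rw [← hr_def] at hLY2
          have hexp0 : Real.exp (-c₂ * r^2 / u) ≤ 1 := by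
            have h0 : (0:ℝ) ≤ c₂ * r^2 / u :=
              div_nonneg (mul_nonneg hc₂.le (sq_nonneg r)) hu0.le
            calc Real.exp (-c₂ * r^2 / u) ≤ Real.exp 0 := by
                  apply Real.exp_le_exp.2
                  rw [show -c₂ * r^2 / u = -(c₂ * r^2 / u) by ring]
                  linarith
              _ = 1 := Real.exp_zero
          have hVb : C₂ / (μ (ball y (Real.sqrt u))).toReal ≤
              C₂ * (C₀ * (τ / Real.sqrt u) ^ ν / (μ (ball y τ)).toReal) := by
            have hd := hVdoub y (Real.sqrt u) τ hsu hsuτ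
            have h1 : 1 / (μ (ball y (Real.sqrt u))).toReal ≤
                C₀ * (τ / Real.sqrt u) ^ ν / (μ (ball y τ)).toReal := by
              rw [div_le_div_iff₀ hVsu hVτ]
              calc 1 * (μ (ball y τ)).toReal = (μ (ball y τ)).toReal := one_mul _
                _ ≤ C₀ * (τ / Real.sqrt u) ^ ν * (μ (ball y (Real.sqrt u))).toReal := hd
            calc C₂ / (μ (ball y (Real.sqrt u))).toReal
                = C₂ * (1 / (μ (ball y (Real.sqrt u))).toReal) := by ring
              _ ≤ C₂ * (C₀ * (τ / Real.sqrt u) ^ ν / (μ (ball y τ)).toReal) :=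
                  mul_le_mul_of_nonneg_left h1 hC₂.le
          have hh : h u x y ≤ C₂ * (C₀ * (τ / Real.sqrt u) ^ ν / (μ (ball y τ)).toReal) := by
            calc h u x y ≤ C₂ / (μ (ball y (Real.sqrt u))).toReal *
                Real.exp (-c₂ * r^2 / u) := hLY2
              _ ≤ C₂ / (μ (ball y (Real.sqrt u))).toReal * 1 :=
                  mul_le_mul_of_nonneg_left hexp0
                    (div_nonneg hC₂.le ENNReal.toReal_nonneg)
              _ = C₂ / (μ (ball y (Real.sqrt u))).toReal := mul_one _
              _ ≤ C₂ * (C₀ * (τ / Real.sqrt u) ^ ν / (μ (ball y τ)).toReal) := hVb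
          have hx : 0 < ca * t ^ (2/(2-α)) * u ^ (-q) :=
            mul_pos (mul_pos hca hT') (Real.rpow_pos_of_pos hu0 _)
          have hsubexp : Real.exp (-ca * t ^ (2/(2-α)) * u ^ (-q)) ≤
              na ^ na * (ca * t ^ (2/(2-α)) * u ^ (-q)) ^ (-na) := by
            have := aux_exp_le hna hx
            rw [show -ca * t ^ (2/(2-α)) * u ^ (-q)
              = -(ca * t ^ (2/(2-α)) * u ^ (-q)) by ring]
            exact this
          have hηb : η t u ≤ Cs * (t ^ (1/(2-α)) * (u ^ (-a) *
              (na ^ na * (ca * t ^ (2/(2-α)) * u ^ (-q)) ^ (-na)))) := by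
            calc η t u ≤ Cs * (t ^ (1/(2-α)) * u ^ (-a) *
                Real.exp (-ca * t ^ (2/(2-α)) * u ^ (-q))) := hη1 t ht u hu0 huT
              _ ≤ Cs * (t ^ (1/(2-α)) * u ^ (-a) *
                  (na ^ na * (ca * t ^ (2/(2-α)) * u ^ (-q)) ^ (-na))) := by
                  apply mul_le_mul_of_nonneg_left _ hCs.le
                  exact mul_le_mul_of_nonneg_left hsubexp
                    (mul_nonneg (Real.rpow_nonneg ht.le _) (Real.rpow_nonneg hu0.le _))
              _ = Cs * (t ^ (1/(2-α)) * (u ^ (-a) *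
                  (na ^ na * (ca * t ^ (2/(2-α)) * u ^ (-q)) ^ (-na)))) := by ring
          have hcomb : f u ≤ (C₂ * (C₀ * (τ / Real.sqrt u) ^ ν / (μ (ball y τ)).toReal)) *
              (Cs * (t ^ (1/(2-α)) * (u ^ (-a) *
                (na ^ na * (ca * t ^ (2/(2-α)) * u ^ (-q)) ^ (-na))))) :=
            mul_le_mul hh hηb (hηpos t ht u hu0).le
              (mul_nonneg hC₂.le (div_nonneg (mul_nonneg hC₀.le hW.le) hVτ.le))
          have hcoll := aux_collect2 (u := u) (τ := τ) (ca := ca) (T' := t ^ (2/(2-α)))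
            (a := a) (nu := ν) (q := q) (na := na) hu0 hτ hca hT' hqna
          refine le_trans hcomb (le_of_eq ?_)
          rw [hK_def, hK1b_def]
          linear_combination (C₂ * C₀ * Cs * na ^ na * t ^ (1/(2-α)) /
            (μ (ball y τ)).toReal) * hcoll
        obtain ⟨hint1, hle1⟩ := aux_setIntegral_le measurableSet_Ioc hvol_ne1
          ((hfm t x y).aestronglyMeasurable) (fun u hu => hfnn u hu.1) hbd
        refine ⟨hint1, ?_⟩
        have e : t ^ (1/(2-α)) * (t ^ (2/(2-α))) ^ (-na) * τ ^ ν * T2 = t * τ ^ (-α) := by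
          have h1 : (t ^ (2/(2-α)) : ℝ) ^ (-na) = t ^ ((2/(2-α)) * (-na)) :=
            (Real.rpow_mul ht.le _ _).symm
          have h2 : τ ^ ν = t ^ ((1/α) * ν) := by
            rw [hτ_def]; exact (Real.rpow_mul ht.le _ _).symm
          have h3 : τ ^ (-α) = t ^ ((1/α) * (-α)) := by
            rw [hτ_def]; exact (Real.rpow_mul ht.le _ _).symm
          have h4 : t * t ^ ((1/α) * (-α)) = t ^ (1 + (1/α) * (-α)) := by
            rw [Real.rpow_add ht, Real.rpow_one]
          rw [h1, h2, h3, hT2_def, ← Real.rpow_add ht, ← Real.rpow_add ht,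
            ← Real.rpow_add ht, h4]
          congr 1
          have h42 : (4:ℝ) - 2*α ≠ 0 := by intro hc; linarith
          rw [hna_def, ha_def]
          field_simp
          ring
        calc ∫ u in Set.Ioc (0:ℝ) T2, f u ≤ K * (volume (Set.Ioc (0:ℝ) T2)).toReal := hle1
          _ = K1b * (t ^ (1/(2-α)) * (t ^ (2/(2-α))) ^ (-na) * τ ^ ν * T2) /
              (μ (ball y τ)).toReal := by rw [hvolT2, hK_def]; ring
          _ = K1b * (t * τ ^ (-α)) / (μ (ball y τ)).toReal := by rw [e]
          _ ≤ B₁ * g := by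
              rw [hg_def, hRτ, hB1_def,
                show (K1a + K1b) * (t * τ ^ (-α) / (μ (ball y τ)).toReal)
                  = (K1a + K1b) * (t * τ ^ (-α)) / (μ (ball y τ)).toReal by ring]
              apply (div_le_div_iff_of_pos_right hVτ).2
              have hx2 : 0 ≤ t * τ ^ (-α) := mul_nonneg ht.le (Real.rpow_nonneg hτ.le _)
              apply mul_le_mul_of_nonneg_right _ hx2
              linarith
    -- ### piece 2 : intermediate times
    have piece2 : IntegrableOn f (Set.Ioc T2 (R^2)) ∧
        ∫ u in Set.Ioc T2 (R^2), f u ≤ B₂ * g := by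
      rcases le_or_gt τ r with hcase | hcase
      · -- τ ≤ r, here R = r
        have hRr : R = r := by rw [hR_def]; exact max_eq_left hcase
        have hrpos : 0 < r := lt_of_lt_of_le hτ hcase
        have hVr : 0 < (μ (ball y r)).toReal := hVpos' y r hrpos
        have hvol_ne2 : volume (Set.Ioc T2 (R^2)) ≠ ⊤ := by
          rw [Real.volume_Ioc]; exact ENNReal.ofReal_ne_top
        set K : ℝ := C₂ * C₀ * Cs * pb ^ pb *
          (c₂ ^ (-pb) * r ^ (-(2*(1 + α/2)))) * t / (μ (ball y r)).toReal with hK_def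
        have hK0 : 0 ≤ K := by
          rw [hK_def]
          have h1 : (0:ℝ) < pb ^ pb := Real.rpow_pos_of_pos hpb _
          have h2 : (0:ℝ) < c₂ ^ (-pb) := Real.rpow_pos_of_pos hc₂ _
          have h3 : (0:ℝ) < r ^ (-(2*(1 + α/2))) := Real.rpow_pos_of_pos hrpos _
          positivity
        have hbd : ∀ u ∈ Set.Ioc T2 (R^2), f u ≤ K := by
          intro u hu
          obtain ⟨hu1, hu2⟩ := hu
          have hu0 : 0 < u := lt_trans hT2 hu1
          rw [hRr] at hu2
          have hsu : 0 < Real.sqrt u := Real.sqrt_pos.2 hu0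
          have hsur : Real.sqrt u ≤ r := by
            have := Real.sqrt_le_sqrt hu2
            rwa [Real.sqrt_sq hrpos.le] at this
          have hVsu : 0 < (μ (ball y (Real.sqrt u))).toReal := hVpos' y _ hsu
          have hW : 0 < (r / Real.sqrt u) ^ ν := Real.rpow_pos_of_pos (div_pos hrpos hsu) _
          have hLY2 := (hLY u hu0 x y).2
          rw [← hr_def] at hLY2
          have hVb : C₂ / (μ (ball y (Real.sqrt u))).toReal ≤
              C₂ * (C₀ * (r / Real.sqrt u) ^ ν / (μ (ball y r)).toReal) := by
            have hd := hVdoub y (Real.sqrt u) r hsu hsur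
            have h1 : 1 / (μ (ball y (Real.sqrt u))).toReal ≤
                C₀ * (r / Real.sqrt u) ^ ν / (μ (ball y r)).toReal := by
              rw [div_le_div_iff₀ hVsu hVr]
              calc 1 * (μ (ball y r)).toReal = (μ (ball y r)).toReal := one_mul _
                _ ≤ C₀ * (r / Real.sqrt u) ^ ν * (μ (ball y (Real.sqrt u))).toReal := hd
            calc C₂ / (μ (ball y (Real.sqrt u))).toReal
                = C₂ * (1 / (μ (ball y (Real.sqrt u))).toReal) := by ring
              _ ≤ C₂ * (C₀ * (r / Real.sqrt u) ^ ν / (μ (ball y r)).toReal) :=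
                  mul_le_mul_of_nonneg_left h1 hC₂.le
          have hx : 0 < c₂ * r^2 / u := div_pos (mul_pos hc₂ (pow_pos hrpos 2)) hu0
          have hgauss : Real.exp (-c₂ * r^2 / u) ≤ pb ^ pb * (c₂ * r^2 / u) ^ (-pb) := by
            have := aux_exp_le hpb hx
            rw [show -c₂ * r^2 / u = -(c₂ * r^2 / u) by ring]
            exact this
          have hh : h u x y ≤ C₂ * (C₀ * (r / Real.sqrt u) ^ ν / (μ (ball y r)).toReal) *
              (pb ^ pb * (c₂ * r^2 / u) ^ (-pb)) := by
            calc h u x y ≤ C₂ / (μ (ball y (Real.sqrt u))).toReal *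
                Real.exp (-c₂ * r^2 / u) := hLY2
              _ ≤ _ := mul_le_mul hVb hgauss (Real.exp_pos _).le
                  (mul_nonneg hC₂.le (div_nonneg (mul_nonneg hC₀.le hW.le) hVr.le))
          have hηb : η t u ≤ Cs * (t * u ^ (-1-α/2)) := hη2ub t ht u hu0 hu1
          have hcomb : f u ≤ (C₂ * (C₀ * (r / Real.sqrt u) ^ ν / (μ (ball y r)).toReal) *
              (pb ^ pb * (c₂ * r^2 / u) ^ (-pb))) * (Cs * (t * u ^ (-1-α/2))) :=
            mul_le_mul hh hηb (hηpos t ht u hu0).le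
              (mul_nonneg
                (mul_nonneg hC₂.le (div_nonneg (mul_nonneg hC₀.le hW.le) hVr.le))
                (mul_nonneg (Real.rpow_nonneg hpb.le _) (Real.rpow_nonneg hx.le _)))
          have hcoll := aux_collect1 (u := u) (r := r) (c := c₂) (a := 1 + α/2) (nu := ν)
            hu0 hrpos hc₂
          rw [show (-(1 + α/2) : ℝ) = -1-α/2 by ring, ← hpb_def] at hcoll
          refine le_trans hcomb (le_of_eq ?_)
          rw [hK_def]
          linear_combination (C₂ * C₀ * Cs * pb ^ pb * t /
            (μ (ball y r)).toReal) * hcoll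
        obtain ⟨hint2, hle2⟩ := aux_setIntegral_le measurableSet_Ioc hvol_ne2
          ((hfm t x y).aestronglyMeasurable) (fun u hu => hfnn u (lt_trans hT2 hu.1)) hbd
        refine ⟨hint2, ?_⟩
        have hvolI : (volume (Set.Ioc T2 (R^2))).toReal = R^2 - T2 := by
          rw [Real.volume_Ioc, ENNReal.toReal_ofReal (by linarith)]
        have er : r ^ (-(2*(1 + α/2))) * r^2 = r ^ (-α) := by
          rw [← Real.rpow_natCast r 2, ← Real.rpow_add hrpos]
          congr 1
          push_cast
          ring
        calc ∫ u in Set.Ioc T2 (R^2), f u ≤ K * (volume (Set.Ioc T2 (R^2))).toReal := hle2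
          _ = K * (R^2 - T2) := by rw [hvolI]
          _ ≤ K * r^2 := by
              apply mul_le_mul_of_nonneg_left _ hK0
              rw [hRr]
              linarith
          _ = B₂ * g := by
              rw [hK_def, hB2_def, hg_def, hRr]
              linear_combination (C₂ * C₀ * Cs * pb ^ pb * c₂ ^ (-pb) * t /
                (μ (ball y r)).toReal) * er
      · -- r < τ : the interval is empty
        have hRτ : R = τ := by rw [hR_def]; exact max_eq_right hcase.le
        have hR2T2 : R^2 = T2 := by rw [hRτ, ← hT2τ]
        have hempty : Set.Ioc T2 (R^2) = ∅ := by rw [hR2T2]; exact Set.Ioc_self T2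
        refine ⟨by rw [hempty]; exact integrableOn_empty, ?_⟩
        rw [hempty, MeasureTheory.setIntegral_empty]
        exact (mul_pos hB2 hg0).le
    -- ### piece 3 : large times
    have piece3 : IntegrableOn f (Set.Ioi (R^2)) ∧
        ∫ u in Set.Ioi (R^2), f u ≤ B₃ * g := by
      have hR2 : (0:ℝ) < R^2 := pow_pos hR0 2
      have hmaj : ∀ u ∈ Set.Ioi (R^2), f u ≤
          (C₂ * Cs * t / (μ (ball y R)).toReal) * u ^ (-1-α/2) := by
        intro u hu
        have hu1 : R^2 < u := hu
        have hu0 : 0 < u := lt_trans hR2 hu1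
        have huT2 : T2 < u := lt_of_le_of_lt hT2R2 hu1
        have hsu : 0 < Real.sqrt u := Real.sqrt_pos.2 hu0
        have hRsu : R ≤ Real.sqrt u := by
          have := Real.sqrt_le_sqrt hu1.le
          rwa [Real.sqrt_sq hR0.le] at this
        have hVle : (μ (ball y R)).toReal ≤ (μ (ball y (Real.sqrt u))).toReal :=
          hVmono y _ _ hsu hRsu
        have hLY2 := (hLY u hu0 x y).2
        rw [← hr_def] at hLY2
        have hexp0 : Real.exp (-c₂ * r^2 / u) ≤ 1 := by
          have h0 : (0:ℝ) ≤ c₂ * r^2 / u :=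
            div_nonneg (mul_nonneg hc₂.le (sq_nonneg r)) hu0.le
          calc Real.exp (-c₂ * r^2 / u) ≤ Real.exp 0 := by
                apply Real.exp_le_exp.2
                rw [show -c₂ * r^2 / u = -(c₂ * r^2 / u) by ring]
                linarith
            _ = 1 := Real.exp_zero
        have hh : h u x y ≤ C₂ / (μ (ball y R)).toReal := by
          calc h u x y ≤ C₂ / (μ (ball y (Real.sqrt u))).toReal *
              Real.exp (-c₂ * r^2 / u) := hLY2
            _ ≤ C₂ / (μ (ball y (Real.sqrt u))).toReal * 1 :=
                mul_le_mul_of_nonneg_left hexp0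
                  (div_nonneg hC₂.le ENNReal.toReal_nonneg)
            _ = C₂ / (μ (ball y (Real.sqrt u))).toReal := mul_one _
            _ ≤ C₂ / (μ (ball y R)).toReal :=
                div_le_div_of_nonneg_left hC₂.le hV hVle
        have hηb := hη2ub t ht u hu0 huT2
        calc f u = h u x y * η t u := rfl
          _ ≤ (C₂ / (μ (ball y R)).toReal) * (Cs * (t * u ^ (-1-α/2))) :=
              mul_le_mul hh hηb (hηpos t ht u hu0).le
                (div_nonneg hC₂.le ENNReal.toReal_nonneg)
          _ = (C₂ * Cs * t / (μ (ball y R)).toReal) * u ^ (-1-α/2) := by ring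
      have hmaj_int : IntegrableOn
          (fun u : ℝ => (C₂ * Cs * t / (μ (ball y R)).toReal) * u ^ (-1-α/2))
          (Set.Ioi (R^2)) :=
        (integrableOn_Ioi_rpow_of_lt (by linarith) hR2).const_mul _
      have hint3 : IntegrableOn f (Set.Ioi (R^2)) := by
        refine Integrable.mono' hmaj_int ((hfm t x y).aestronglyMeasurable) ?_
        refine (ae_restrict_iff' measurableSet_Ioi).2 (ae_of_all _ fun u hu => ?_)
        rw [Real.norm_eq_abs, abs_of_nonneg (hfnn u (lt_trans hR2 hu))]
        exact hmaj u hu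
      refine ⟨hint3, ?_⟩
      have hIval : ∫ u in Set.Ioi (R^2), u ^ (-1-α/2 : ℝ) = R ^ (-α) * (2/α) := by
        rw [integral_Ioi_rpow_of_lt (by linarith) hR2, show (-1-α/2)+1 = -(α/2) by ring]
        have hRR : ((R:ℝ)^2) ^ (-(α/2) : ℝ) = R ^ (-α) := by
          rw [← Real.rpow_natCast R 2, ← Real.rpow_mul hR0.le]
          congr 1
          push_cast
          ring
        rw [hRR]
        field_simp
        try ring
      calc ∫ u in Set.Ioi (R^2), f u
          ≤ ∫ u in Set.Ioi (R^2), (C₂ * Cs * t / (μ (ball y R)).toReal) * u ^ (-1-α/2) :=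
            setIntegral_mono_on hint3 hmaj_int measurableSet_Ioi hmaj
        _ = (C₂ * Cs * t / (μ (ball y R)).toReal) *
            ∫ u in Set.Ioi (R^2), u ^ (-1-α/2 : ℝ) := by
            rw [MeasureTheory.integral_const_mul]
        _ = B₃ * g := by rw [hIval, hB3_def, hg_def]; ring
    -- ### combine the three pieces
    have hd1 : Disjoint (Set.Ioc (0:ℝ) T2) (Set.Ioi T2) := by
      rw [Set.disjoint_left]
      rintro u ⟨_, h1⟩ h2
      exact absurd h2 (not_lt.2 h1)
    have hd2 : Disjoint (Set.Ioc T2 (R^2)) (Set.Ioi (R^2)) := by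
      rw [Set.disjoint_left]
      rintro u ⟨_, h1⟩ h2
      exact absurd h2 (not_lt.2 h1)
    have hsplit2 : Set.Ioi T2 = Set.Ioc T2 (R^2) ∪ Set.Ioi (R^2) :=
      (Set.Ioc_union_Ioi_eq_Ioi hT2R2).symm
    have hsplit1 : Set.Ioi (0:ℝ) = Set.Ioc 0 T2 ∪ Set.Ioi T2 :=
      (Set.Ioc_union_Ioi_eq_Ioi hT2.le).symm
    have hint23 : IntegrableOn f (Set.Ioi T2) := by
      rw [hsplit2]; exact piece2.1.union piece3.1
    have hintAll : IntegrableOn f (Set.Ioi (0:ℝ)) := by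
      rw [hsplit1]; exact piece1.1.union hint23
    refine ⟨hintAll, ?_⟩
    have heq : Pker h η t x y = (∫ u in Set.Ioc (0:ℝ) T2, f u) +
        ((∫ u in Set.Ioc T2 (R^2), f u) + ∫ u in Set.Ioi (R^2), f u) := by
      have h0 : Pker h η t x y = ∫ u in Set.Ioi (0:ℝ), f u := rfl
      rw [h0, hsplit1, setIntegral_union hd1 measurableSet_Ioi piece1.1 hint23, hsplit2,
        setIntegral_union hd2 measurableSet_Ioi piece2.1 piece3.1]
    rw [heq]
    calc (∫ u in Set.Ioc (0:ℝ) T2, f u) +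
        ((∫ u in Set.Ioc T2 (R^2), f u) + ∫ u in Set.Ioi (R^2), f u)
        ≤ B₁ * g + (B₂ * g + B₃ * g) :=
          add_le_add piece1.2 (add_le_add piece2.2 piece3.2)
      _ = Bup * g := by rw [hBup_def]; ring
  -- lower bound
  have hlow : ∀ t : ℝ, 0 < t → ∀ x y : M,
      Alow * (t * (max (dist x y) (t ^ (1/α))) ^ (-α) /
        (μ (ball y (max (dist x y) (t ^ (1/α))))).toReal) ≤ Pker h η t x y := by
    intro t ht x y
    set r : ℝ := dist x y with hr_def
    have hr0 : 0 ≤ r := dist_nonneg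
    set τ : ℝ := t ^ (1/α) with hτ_def
    have hτ : 0 < τ := Real.rpow_pos_of_pos ht _
    set R : ℝ := max r τ with hR_def
    have hτR : τ ≤ R := le_max_right _ _
    have hrR : r ≤ R := le_max_left _ _
    have hR0 : 0 < R := lt_of_lt_of_le hτ hτR
    set T2 : ℝ := t ^ (2/α) with hT2_def
    have hT2 : 0 < T2 := Real.rpow_pos_of_pos ht _
    have hT2τ : T2 = τ ^ 2 := by
      rw [hT2_def, hτ_def, ← Real.rpow_natCast (t ^ (1/α)) 2, ← Real.rpow_mul ht.le]
      congr 1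
      push_cast
      field_simp
    have hT2R2 : T2 ≤ R ^ 2 := by
      rw [hT2τ]; exact pow_le_pow_left₀ hτ.le hτR 2
    have hV : 0 < (μ (ball y R)).toReal := hVpos' y R hR0
    set f : ℝ → ℝ := fun u => h u x y * η t u with hf_def
    have hfnn : ∀ u ∈ Set.Ioi (0:ℝ), 0 ≤ f u := fun u hu =>
      mul_nonneg (hhnn u hu x y) (hηpos t ht u hu).le
    -- pointwise lower bound on the window
    set Klow : ℝ := c₁ * Real.exp (-C₁) / (C₀ * Real.sqrt 2 ^ ν * (μ (ball y R)).toReal) *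
      (cs * (t * (2 * R ^ 2) ^ (-1-α/2))) with hKlow_def
    have hbd : ∀ u ∈ Set.Ioc (R^2) (2 * R^2), Klow ≤ f u := by
      intro u hu
      obtain ⟨hu1, hu2⟩ := hu
      have hu0 : 0 < u := lt_trans (pow_pos hR0 2) hu1
      have huT2 : T2 < u := lt_of_le_of_lt hT2R2 hu1
      have hsu : 0 < Real.sqrt u := Real.sqrt_pos.2 hu0
      -- η lower bound
      have hη := hη2lb t ht u hu0 huT2
      have hηmono : cs * (t * (2 * R ^ 2) ^ (-1-α/2)) ≤ cs * (t * u ^ (-1-α/2)) := by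
        apply mul_le_mul_of_nonneg_left _ hcs.le
        apply mul_le_mul_of_nonneg_left _ ht.le
        exact Real.rpow_le_rpow_of_nonpos hu0 hu2 (by linarith)
      -- heat kernel lower bound
      have hLY1 := (hLY u hu0 x y).1
      rw [← hr_def] at hLY1
      have hexp : Real.exp (-C₁) ≤ Real.exp (-C₁ * r^2 / u) := by
        apply Real.exp_le_exp.2
        rw [neg_mul, neg_div, neg_le_neg_iff]
        rw [div_le_iff₀ hu0]
        have hru : r^2 ≤ u := le_trans (pow_le_pow_left₀ hr0 hrR 2) hu1.le
        exact mul_le_mul_of_nonneg_left hru hC₁.le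
      have hsub : Real.sqrt u ≤ Real.sqrt 2 * R := by
        have h1 : Real.sqrt u ≤ Real.sqrt (2 * R^2) := Real.sqrt_le_sqrt hu2
        rwa [Real.sqrt_mul (by norm_num : (0:ℝ) ≤ 2), Real.sqrt_sq hR0.le] at h1
      have hVsu : 0 < (μ (ball y (Real.sqrt u))).toReal := hVpos' y _ hsu
      have hVb : (μ (ball y (Real.sqrt u))).toReal ≤
          C₀ * Real.sqrt 2 ^ ν * (μ (ball y R)).toReal := by
        have hm := hVmono y (Real.sqrt u) (Real.sqrt 2 * R) (by positivity) hsub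
        have hd := hVdoub y R (Real.sqrt 2 * R) hR0
          (le_mul_of_one_le_left hR0.le (by
            rw [show (1:ℝ) = Real.sqrt 1 by simp]
            exact Real.sqrt_le_sqrt (by norm_num)))
        have h22 : Real.sqrt 2 * R / R = Real.sqrt 2 := by field_simp
        rw [h22] at hd
        exact le_trans hm hd
      have hVinv : c₁ / (C₀ * Real.sqrt 2 ^ ν * (μ (ball y R)).toReal) ≤
          c₁ / (μ (ball y (Real.sqrt u))).toReal :=
        div_le_div_of_nonneg_left hc₁.le hVsu hVb
      calc Klow = (c₁ / (C₀ * Real.sqrt 2 ^ ν * (μ (ball y R)).toReal) * Real.exp (-C₁)) *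
            (cs * (t * (2 * R ^ 2) ^ (-1-α/2))) := by rw [hKlow_def]; ring
        _ ≤ (c₁ / (μ (ball y (Real.sqrt u))).toReal * Real.exp (-C₁ * r^2 / u)) *
            (cs * (t * u ^ (-1-α/2))) := by
            apply mul_le_mul _ hηmono
              (mul_nonneg hcs.le (mul_nonneg ht.le (Real.rpow_nonneg (by positivity) _)))
              (mul_nonneg (div_nonneg hc₁.le ENNReal.toReal_nonneg) (Real.exp_pos _).le)
            exact mul_le_mul hVinv hexp (Real.exp_pos _).le
              (div_nonneg hc₁.le ENNReal.toReal_nonneg)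
        _ ≤ h u x y * η t u := mul_le_mul hLY1 hη
            (mul_nonneg hcs.le (mul_nonneg ht.le (Real.rpow_nonneg hu0.le _)))
            (hhnn u hu0 x y)
        _ = f u := rfl
    -- integrate
    have hIoc_sub : Set.Ioc (R^2) (2*R^2) ⊆ Set.Ioi (0:ℝ) := fun u hu =>
      lt_trans (pow_pos hR0 2) hu.1
    have hint : IntegrableOn f (Set.Ioi (0:ℝ)) := (main t ht x y).1
    have hintJ : IntegrableOn f (Set.Ioc (R^2) (2*R^2)) := hint.mono_set hIoc_sub
    have step1 : Klow * (volume (Set.Ioc (R^2) (2*R^2))).toReal ≤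
        ∫ u in Set.Ioc (R^2) (2*R^2), f u :=
      aux_le_setIntegral measurableSet_Ioc (by rw [Real.volume_Ioc]; exact ENNReal.ofReal_ne_top)
        hintJ hbd
    have hvol : (volume (Set.Ioc (R^2) (2*R^2))).toReal = R^2 := by
      have hnn : (0:ℝ) ≤ 2*R^2 - R^2 := by
        have := sq_nonneg R
        simp only [sq] at this ⊢
        linarith
      rw [Real.volume_Ioc, ENNReal.toReal_ofReal hnn]
      ring
    have step2 : ∫ u in Set.Ioc (R^2) (2*R^2), f u ≤ Pker h η t x y := by
      have : Pker h η t x y = ∫ u in Set.Ioi (0:ℝ), f u := rfl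
      rw [this]
      apply setIntegral_mono_set hint
      · exact (ae_restrict_iff' measurableSet_Ioi).2 (ae_of_all _ hfnn)
      · exact HasSubset.Subset.eventuallyLE hIoc_sub
    have hfinal : Alow * (t * R ^ (-α) / (μ (ball y R)).toReal) = Klow * R^2 := by
      have hcoll := aux_collect3 (R := R) (e := -1-α/2) hR0
      rw [show 2*(-1-α/2)+2 = -α by ring] at hcoll
      rw [hAlow_def, hKlow_def]
      linear_combination (-(c₁ * Real.exp (-C₁) * cs * t) /
        (C₀ * Real.sqrt 2 ^ ν * (μ (ball y R)).toReal)) * hcoll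
    calc Alow * (t * R ^ (-α) / (μ (ball y R)).toReal) = Klow * R^2 := hfinal
      _ = Klow * (volume (Set.Ioc (R^2) (2*R^2))).toReal := by rw [hvol]
      _ ≤ ∫ u in Set.Ioc (R^2) (2*R^2), f u := step1
      _ ≤ Pker h η t x y := step2
  -- comparability of the comparison function
  set D : ℝ := (2:ℝ) ^ α * (C₀ * C₀ * ((2:ℝ) ^ ν * (2:ℝ) ^ ν)) with hD_def
  have hD : 0 < D := by rw [hD_def]; positivity
  have gcomp : ∀ t : ℝ, 0 < t → ∀ x y z : M, dist y z ≤ t ^ (1/α) →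
      t * (max (dist x y) (t ^ (1/α))) ^ (-α) /
        (μ (ball y (max (dist x y) (t ^ (1/α))))).toReal ≤
      D * (t * (max (dist x z) (t ^ (1/α))) ^ (-α) /
        (μ (ball z (max (dist x z) (t ^ (1/α))))).toReal) := by
    intro t ht x y z hdz
    set τ : ℝ := t ^ (1/α) with hτ_def
    have hτ : 0 < τ := Real.rpow_pos_of_pos ht _
    set Ry : ℝ := max (dist x y) τ with hRy_def
    set Rz : ℝ := max (dist x z) τ with hRz_def
    have hτRy : τ ≤ Ry := le_max_right _ _
    have hτRz : τ ≤ Rz := le_max_right _ _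
    have hRy : 0 < Ry := lt_of_lt_of_le hτ hτRy
    have hRz : 0 < Rz := lt_of_lt_of_le hτ hτRz
    have hVy : 0 < (μ (ball y Ry)).toReal := hVpos' y Ry hRy
    have hVz : 0 < (μ (ball z Rz)).toReal := hVpos' z Rz hRz
    have hdxy : dist x y ≤ Ry := by rw [hRy_def]; exact le_max_left _ _
    have hRz2Ry : Rz ≤ 2 * Ry := by
      rw [hRz_def]
      apply max_le
      · have := dist_triangle x y z
        linarith
      · linarith
    have hhalf : Rz / 2 ≤ Ry := by linarith
    have e1 : Ry ^ (-α) ≤ (Rz/2) ^ (-α) :=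
      Real.rpow_le_rpow_of_nonpos (by positivity) hhalf (by linarith)
    have e2 : (Rz/2 : ℝ) ^ (-α) = 2 ^ α * Rz ^ (-α) := by
      rw [Real.div_rpow hRz.le (by norm_num : (0:ℝ) ≤ 2),
        Real.rpow_neg (by norm_num : (0:ℝ) ≤ 2), div_inv_eq_mul]
      ring

    have hdzy : dist z y ≤ τ := by rw [dist_comm]; exact hdz
    have hv1 : (μ (ball z Rz)).toReal ≤ (μ (ball z (2*Ry))).toReal :=
      hVmono z _ _ (by linarith) hRz2Ry
    have hv2 : (μ (ball z (2*Ry))).toReal ≤ C₀ * 2 ^ ν * (μ (ball z Ry)).toReal := by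
      have hstep := hVdoub z Ry (2*Ry) hRy (by linarith)
      have h22 : (2*Ry)/Ry = 2 := by field_simp
      rwa [h22] at hstep
    have hv3 : (μ (ball z Ry)).toReal ≤ C₀ * 2 ^ ν * (μ (ball y Ry)).toReal := by
      have hc := hcomp z y Ry hRy
      have hb : (1 + dist z y / Ry) ^ ν ≤ (2:ℝ) ^ ν := by
        apply Real.rpow_le_rpow (by positivity) ?_ hν.le
        have : dist z y / Ry ≤ 1 := by
          rw [div_le_one hRy]; exact le_trans hdzy hτRy
        linarith
      calc (μ (ball z Ry)).toReal
          ≤ C₀ * (1 + dist z y / Ry) ^ ν * (μ (ball y Ry)).toReal := hc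
        _ ≤ C₀ * 2^ν * (μ (ball y Ry)).toReal := by
            apply mul_le_mul_of_nonneg_right _ ENNReal.toReal_nonneg
            exact mul_le_mul_of_nonneg_left hb hC₀.le
    have hvchain : (μ (ball z Rz)).toReal
        ≤ C₀ * 2^ν * (C₀ * 2^ν * (μ (ball y Ry)).toReal) :=
      le_trans hv1 (le_trans hv2 (mul_le_mul_of_nonneg_left hv3 (by positivity)))
    have hinv : 1 / (μ (ball y Ry)).toReal
        ≤ C₀ * C₀ * ((2:ℝ)^ν * (2:ℝ)^ν) / (μ (ball z Rz)).toReal := by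
      rw [div_le_div_iff₀ hVy hVz]
      calc 1 * (μ (ball z Rz)).toReal = (μ (ball z Rz)).toReal := one_mul _
        _ ≤ C₀ * 2^ν * (C₀ * 2^ν * (μ (ball y Ry)).toReal) := hvchain
        _ = C₀ * C₀ * ((2:ℝ)^ν*(2:ℝ)^ν) * (μ (ball y Ry)).toReal := by ring
    calc t * Ry ^ (-α) / (μ (ball y Ry)).toReal
        = (t * Ry^(-α)) * (1 / (μ (ball y Ry)).toReal) := by ring
      _ ≤ (t * (2^α * Rz^(-α))) * (C₀ * C₀ * ((2:ℝ)^ν*(2:ℝ)^ν) / (μ (ball z Rz)).toReal) := by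
          apply mul_le_mul ?_ hinv (by positivity) ?_
          · exact mul_le_mul_of_nonneg_left (le_trans e1 (le_of_eq e2)) ht.le
          · have := Real.rpow_pos_of_pos hRz (-α)
            positivity
      _ = D * (t * Rz^(-α) / (μ (ball z Rz)).toReal) := by rw [hD_def]; ring
  -- assemble
  refine ⟨max 1 (Bup * D / Alow), le_max_left _ _, ?_⟩
  intro t ht x y z hdist
  set τ : ℝ := t ^ (1/α) with hτ_def
  have hτ : 0 < τ := Real.rpow_pos_of_pos ht _
  set Ry : ℝ := max (dist x y) τ with hRy_def
  set Rz : ℝ := max (dist x z) τ with hRz_def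
  have hRy : 0 < Ry := lt_of_lt_of_le hτ (le_max_right _ _)
  have hRz : 0 < Rz := lt_of_lt_of_le hτ (le_max_right _ _)
  set gy : ℝ := t * Ry ^ (-α) / (μ (ball y Ry)).toReal with hgy_def
  set gz : ℝ := t * Rz ^ (-α) / (μ (ball z Rz)).toReal with hgz_def
  have hgy : 0 < gy := by
    rw [hgy_def]
    exact div_pos (mul_pos ht (Real.rpow_pos_of_pos hRy _)) (hVpos' y Ry hRy)
  have hgz : 0 < gz := by
    rw [hgz_def]
    exact div_pos (mul_pos ht (Real.rpow_pos_of_pos hRz _)) (hVpos' z Rz hRz)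
  have hPy_ub : Pker h η t x y ≤ Bup * gy := (main t ht x y).2
  have hPz_ub : Pker h η t x z ≤ Bup * gz := (main t ht x z).2
  have hPy_lb : Alow * gy ≤ Pker h η t x y := hlow t ht x y
  have hPz_lb : Alow * gz ≤ Pker h η t x z := hlow t ht x z
  have hgyz : gy ≤ D * gz := gcomp t ht x y z hdist
  have hgzy : gz ≤ D * gy := by
    have : dist z y ≤ t ^ (1/α) := by rw [dist_comm]; exact hdist
    exact gcomp t ht x z y this
  have hPy : 0 < Pker h η t x y := lt_of_lt_of_le (mul_pos hAlow hgy) hPy_lb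
  have hPz : 0 < Pker h η t x z := lt_of_lt_of_le (mul_pos hAlow hgz) hPz_lb
  have hBD : 0 < Bup * D / Alow := div_pos (mul_pos hBup hD) hAlow
  constructor
  · -- lower bound on the ratio
    have h1 : Alow * gz / D ≤ Pker h η t x y := by
      refine le_trans ?_ hPy_lb
      rw [div_le_iff₀ hD]
      calc Alow * gz ≤ Alow * (D * gy) := mul_le_mul_of_nonneg_left hgzy hAlow.le
        _ = Alow * gy * D := by ring
    have h2 : Alow * gz / D / (Bup * gz) ≤ Pker h η t x y / Pker h η t x z :=
      div_le_div₀ hPy.le h1 hPz hPz_ub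
    have h3 : Alow * gz / D / (Bup * gz) = Alow / (Bup * D) := by
      rw [div_div, div_eq_div_iff (mul_pos hD (mul_pos hBup hgz)).ne' (mul_pos hBup hD).ne']
      ring
    calc (max 1 (Bup * D / Alow))⁻¹ ≤ (Bup * D / Alow)⁻¹ :=
          inv_anti₀ hBD (le_max_right _ _)
      _ = Alow / (Bup * D) := by rw [inv_div]
      _ ≤ Pker h η t x y / Pker h η t x z := by rw [← h3]; exact h2
  · -- upper bound on the ratio
    have h1 : Pker h η t x y ≤ Bup * (D * gz) :=
      le_trans hPy_ub (mul_le_mul_of_nonneg_left hgyz hBup.le)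
    have h2 : Pker h η t x y / Pker h η t x z ≤ Bup * (D * gz) / (Alow * gz) :=
      div_le_div₀ (mul_nonneg hBup.le (mul_nonneg hD.le hgz.le)) h1 (mul_pos hAlow hgz) hPz_lb
    have h3 : Bup * (D * gz) / (Alow * gz) = Bup * D / Alow := by
      rw [div_eq_div_iff (mul_pos hAlow hgz).ne' hAlow.ne']
      ring
    calc Pker h η t x y / Pker h η t x z ≤ Bup * D / Alow := by rw [← h3]; exact h2
      _ ≤ max 1 (Bup * D / Alow) := le_max_right _ _
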